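/- The duality gap dominates the GAP SAFE radius: for any β ∈ ℝᵖ and θ ∈ Δ_X, R² − r² ≤ (2/λ²)·G_λ(β, θ), where R = ‖θ − y/λ‖, r = (1/λ)√((‖y‖² − ‖Xβ − y‖² − 2λ‖β‖₁)₊), and G_λ(β,θ) = P_λ(β) − D_λ(θ) is the duality gap. -/

import Mathlib

open scoped BigOperators

def toE {n : ℕ} (v : Fin n → ℝ) : EuclideanSpace ℝ (Fin n) := WithLp.toLp 2 v

/-- Proposition 1: the duality gap dominates the GAP SAFE radius:
`R² − r² ≤ (2/λ²)·G_λ(β,θ)` with `R = ‖θ − y/λ‖`,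
`r = (1/λ)√((‖y‖² − ‖Xβ − y‖² − 2λ‖β‖₁)₊)` and `G_λ(β,θ) = P_λ(β) − D_λ(θ)`. -/
theorem lasso_gap_dominates_radius {n p : ℕ}
    (X : Matrix (Fin n) (Fin p) ℝ) (y : EuclideanSpace ℝ (Fin n))
    (lam : ℝ) (hlam : 0 < lam)
    (β : Fin p → ℝ) (θ : EuclideanSpace ℝ (Fin n))
    (hθ : ∀ j, |∑ i, X i j * θ i| ≤ 1)
    (r R G : ℝ)
    (hr : r = (1/lam) * Real.sqrt
      (max (‖y‖^2 - ‖toE (X.mulVec β) - y‖^2 - 2 * lam * ∑ j, |β j|) 0))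
    (hR : R = ‖θ - (1/lam) • y‖)
    (hG : G = ((1/2) * ‖toE (X.mulVec β) - y‖^2 + lam * ∑ j, |β j|)
            - ((1/2) * ‖y‖^2 - (lam^2/2) * ‖θ - (1/lam) • y‖^2)) :
    R^2 - r^2 ≤ (2/lam^2) * G := by
  set A := ‖y‖^2 - ‖toE (X.mulVec β) - y‖^2 - 2 * lam * ∑ j, |β j| with hA
  have hr2 : r^2 = (1/lam)^2 * max A 0 := by
    rw [hr, mul_pow, Real.sq_sqrt (le_max_right A 0)]
  have hAle : A ≤ max A 0 := le_max_left A 0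
  have hlam2 : (0:ℝ) < lam^2 := by positivity
  have key : (2/lam^2) * G = ‖θ - (1/lam) • y‖^2 - A/lam^2 := by
    rw [hG, hA]; field_simp; ring
  have h2 : A/lam^2 ≤ max A 0/lam^2 := by gcongr
  have h3 : (1/lam)^2 * max A 0 = max A 0 / lam^2 := by ring
  rw [hr2, hR, key, h3]
  linarith
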